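/- Let (Γ, μ) be a measure space and let K : Γ → ℝ be a measurable function such that for every real h > 0 the integral of exp(-K/h) with respect to μ equals 1. Then μ({x ∈ Γ : K(x) < 0}) = 0, i.e. K ≥ 0 almost everywhere. -/

import Mathlib

open MeasureTheory Real

lemma measure_sublevel_zero
    {Γ : Type*} [MeasurableSpace Γ] (μ : Measure Γ) (K : Γ → ℝ)
    (hK : Measurable K)
    (hnorm : ∀ h : ℝ, 0 < h →
      ∫⁻ x, ENNReal.ofReal (Real.exp (-(K x) / h)) ∂μ = 1)
    {ε : ℝ} (hε : 0 < ε) : μ {x | K x < -ε} = 0 := by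
  set A : Set Γ := {x | K x < -ε} with hA
  have hAmeas : MeasurableSet A := hK measurableSet_Iio
  -- key bound: μ A ≤ ofReal (exp (-ε/h)) for all h > 0
  have key : ∀ h : ℝ, 0 < h → μ A ≤ ENNReal.ofReal (Real.exp (-ε / h)) := by
    intro h hh
    have hbound : μ A * ENNReal.ofReal (Real.exp (ε / h)) ≤ 1 := by
      calc μ A * ENNReal.ofReal (Real.exp (ε / h))
          = ∫⁻ _ in A, ENNReal.ofReal (Real.exp (ε / h)) ∂μ := by
            rw [setLIntegral_const, mul_comm]
        _ ≤ ∫⁻ x in A, ENNReal.ofReal (Real.exp (-(K x) / h)) ∂μ := by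
            apply setLIntegral_mono' hAmeas
            intro x hx
            apply ENNReal.ofReal_le_ofReal
            apply Real.exp_le_exp.2
            gcongr
            simp only [A, Set.mem_setOf_eq] at hx
            linarith
        _ ≤ ∫⁻ x, ENNReal.ofReal (Real.exp (-(K x) / h)) ∂μ :=
            setLIntegral_le_lintegral _ _
        _ = 1 := hnorm h hh
    have hne : ENNReal.ofReal (Real.exp (ε / h)) ≠ 0 := by
      simp [Real.exp_pos]
    have hnt : ENNReal.ofReal (Real.exp (ε / h)) ≠ ⊤ := ENNReal.ofReal_ne_top
    have := (ENNReal.le_div_iff_mul_le (Or.inl hne) (Or.inl hnt)).2 hbound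
    calc μ A ≤ 1 / ENNReal.ofReal (Real.exp (ε / h)) := this
      _ = ENNReal.ofReal (Real.exp (-ε / h)) := by
          rw [one_div, ← ENNReal.ofReal_inv_of_pos (Real.exp_pos _), ← Real.exp_neg,
            neg_div]
  -- take h = ε / n, n → ∞
  have hle : ∀ n : ℕ, μ A ≤ ENNReal.ofReal (Real.exp (-(n + 1 : ℝ))) := by
    intro n
    have hh : (0:ℝ) < ε / (n + 1) := by positivity
    have := key _ hh
    have heq : -ε / (ε / (n + 1)) = -(n + 1 : ℝ) := by
      field_simp
    rwa [heq] at this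
  have htend : Filter.Tendsto (fun n : ℕ => ENNReal.ofReal (Real.exp (-(n + 1 : ℝ))))
      Filter.atTop (nhds 0) := by
    rw [← ENNReal.ofReal_zero]
    apply ENNReal.tendsto_ofReal
    have : Filter.Tendsto (fun n : ℕ => -((n : ℝ) + 1)) Filter.atTop Filter.atBot := by
      apply Filter.tendsto_neg_atBot_iff.mpr
      exact Filter.tendsto_atTop_add_const_right _ 1 tendsto_natCast_atTop_atTop
    exact Real.tendsto_exp_atBot.comp this
  exact le_antisymm (le_of_tendsto_of_tendsto' tendsto_const_nhds htend hle) zero_le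

/-- First assertion of Lemma 2.7: if `∫ exp(-K/h) dμ = 1` for every `h > 0`,
then `K ≥ 0` almost everywhere, i.e. `μ {K < 0} = 0`. -/
theorem generator_nonneg
    {Γ : Type*} [MeasurableSpace Γ] (μ : Measure Γ) (K : Γ → ℝ)
    (hK : Measurable K)
    (hnorm : ∀ h : ℝ, 0 < h →
      ∫⁻ x, ENNReal.ofReal (Real.exp (-(K x) / h)) ∂μ = 1) :
    μ {x | K x < 0} = 0 := by
  have hU : {x | K x < 0} = ⋃ n : ℕ, {x | K x < -(1 / (n + 1 : ℝ))} := by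
    ext x
    simp only [Set.mem_setOf_eq, Set.mem_iUnion]
    constructor
    · intro hx
      obtain ⟨n, hn⟩ := exists_nat_gt (1 / (-K x))
      refine ⟨n, ?_⟩
      have hKpos : 0 < -K x := by linarith
      have hn1 : 1 / (-K x) < n + 1 := by linarith
      have : 1 / ((n : ℝ) + 1) < -K x := by
        rw [div_lt_iff₀ (by positivity)]
        rw [div_lt_iff₀ hKpos] at hn1
        linarith [mul_comm (-K x) ((n:ℝ)+1)]
      linarith
    · rintro ⟨n, hn⟩
      have : (0:ℝ) < 1 / (n + 1) := by positivity
      linarith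
  rw [hU]
  apply measure_iUnion_null
  intro n
  exact measure_sublevel_zero μ K hK hnorm (by positivity)
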